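/- Let X, Y be sets, μ a finitely additive probability measure on X and λ a finitely additive probability measure on Y, and R ⊆ X × Y with the property that for every ε > 0 there are finite unions of rectangles P_ε ⊆ R ⊆ Q_ε with (μ×λ)(Q_ε) − (μ×λ)(P_ε) ≤ ε. If (μ×λ)-outer measure of R is at least α > 0, then for every δ < α there exist A ⊆ X and B ⊆ Y with A × B ⊆ R, μ(A) > 0 and λ(B) > 0, and in fact μ(A)·λ(B) ≥ (α − ε)/N(ε) where N(ε) is the number of atom-pairs in the partitions generated by the rectangles in P_ε, Q_ε. -/

import Mathlib

def IsFAP {X : Type*} (m : Set X → ℝ) : Prop :=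
  m Set.univ = 1 ∧ (∀ A, 0 ≤ m A) ∧
    ∀ A C : Set X, Disjoint A C → m (A ∪ C) = m A + m C

/-- A union of `n` rectangles. -/
def IsRectUnionN {X Y : Type*} (n : ℕ) (P : Set (X × Y)) : Prop :=
  ∃ (A : Fin n → Set X) (B : Fin n → Set Y), P = ⋃ i, A i ×ˢ B i

section Basic

variable {X : Type*} {m : Set X → ℝ}

lemma IsFAP.empty (hm : IsFAP m) : m ∅ = 0 := by
  have h := hm.2.2 ∅ ∅ (by simp)
  simp at h
  linarith

lemma IsFAP.nonempty (hm : IsFAP m) : Nonempty X := by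
  by_contra h
  have h1 : (Set.univ : Set X) = ∅ :=
    Set.univ_eq_empty_iff.mpr (not_nonempty_iff.mp h)
  have h2 := hm.1
  rw [h1, hm.empty] at h2
  norm_num at h2

lemma IsFAP.le_one (hm : IsFAP m) (A : Set X) : m A ≤ 1 := by
  have h := hm.2.2 A Aᶜ disjoint_compl_right
  rw [Set.union_compl_self, hm.1] at h
  have := hm.2.1 Aᶜ
  linarith

/-- finite additivity over a finset-indexed disjoint family -/
lemma IsFAP.biUnion (hm : IsFAP m) {κ : Type*} (F : Finset κ) (C : κ → Set X)
    (hd : ∀ i ∈ F, ∀ j ∈ F, i ≠ j → Disjoint (C i) (C j)) :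
    m (⋃ i ∈ F, C i) = ∑ i ∈ F, m (C i) := by
  classical
  induction F using Finset.induction_on with
  | empty => simpa using hm.empty
  | insert a F' hnm ih =>
    rw [Finset.set_biUnion_insert, Finset.sum_insert hnm,
      hm.2.2 _ _ ?_, ih ?_]
    · intro i hi j hj hij
      exact hd i (Finset.mem_insert_of_mem hi) j (Finset.mem_insert_of_mem hj) hij
    · refine Set.disjoint_iUnion₂_right.mpr fun i hi => ?_
      exact hd a (Finset.mem_insert_self a F') i (Finset.mem_insert_of_mem hi)
        (fun h => hnm (h ▸ hi))

end Basic

section Atoms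

variable {X : Type*} {ι : Type*}

/-- the atom of the Boolean algebra generated by `A` with signature `s` -/
def fapAtom (A : ι → Set X) (s : ι → Bool) : Set X :=
  {x | ∀ i, x ∈ A i ↔ s i = true}

lemma mem_fapAtom_sig (A : ι → Set X) (x : X) :
    ∃ s, x ∈ fapAtom A s := by
  classical
  exact ⟨fun i => decide (x ∈ A i), fun i => by simp⟩

lemma fapAtom_disjoint (A : ι → Set X) {s t : ι → Bool} (hst : s ≠ t) :
    Disjoint (fapAtom A s) (fapAtom A t) := by
  rw [Set.disjoint_left]
  intro x hxs hxt
  apply hst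
  funext i
  have h1 := hxs i
  have h2 := hxt i
  by_cases hx : x ∈ A i
  · rw [(h1.mp hx), (h2.mp hx)]
  · cases hs : s i <;> cases ht : t i <;> simp_all

lemma fapAtom_subset {A : ι → Set X} {s : ι → Bool} {i : ι} (h : s i = true) :
    fapAtom A s ⊆ A i := fun x hx => (hx i).mpr h

lemma fapAtom_subset_compl {A : ι → Set X} {s : ι → Bool} {i : ι} (h : s i = false) :
    fapAtom A s ⊆ (A i)ᶜ := fun x hx hxi => by simp [(hx i).mp hxi] at h

lemma iUnion_fapAtom (A : ι → Set X) : (⋃ s, fapAtom A s) = Set.univ := by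
  ext x
  simp only [Set.mem_iUnion, Set.mem_univ, iff_true]
  exact mem_fapAtom_sig A x

variable [Fintype ι] [DecidableEq ι]

lemma IsFAP.sum_atoms {m : Set X → ℝ} (hm : IsFAP m) (A : ι → Set X) :
    ∑ s : ι → Bool, m (fapAtom A s) = 1 := by
  rw [← hm.biUnion Finset.univ (fapAtom A)
      (fun i _ j _ hij => fapAtom_disjoint A hij)]
  simp [iUnion_fapAtom, hm.1]

/-- Key lemma: integral of a step function is at most its sup. -/
lemma IsFAP.key {m : Set X → ℝ} (hm : IsFAP m) (c : ι → ℝ) (A : ι → Set X) (M : ℝ)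
    (hM : ∀ x, (∑ i, c i * Set.indicator (A i) 1 x) ≤ M) :
    ∑ i, c i * m (A i) ≤ M := by
  classical
  have h1 : ∀ i, m (A i) = ∑ s : ι → Bool, m (fapAtom A s ∩ A i) := by
    intro i
    have hcov : A i = ⋃ s ∈ Finset.univ, (fapAtom A s ∩ A i) := by
      ext x
      simp only [Finset.mem_univ, Set.iUnion_true, Set.mem_iUnion, Set.mem_inter_iff]
      constructor
      · intro hx
        obtain ⟨s, hs⟩ := mem_fapAtom_sig A x
        exact ⟨s, hs, hx⟩
      · rintro ⟨s, _, hx⟩; exact hx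
    conv_lhs => rw [hcov]
    rw [hm.biUnion _ _ (fun s _ t _ hst =>
      ((fapAtom_disjoint A hst).mono Set.inter_subset_left Set.inter_subset_left))]
  have h2 : ∀ s : ι → Bool, (∑ i, c i * m (fapAtom A s ∩ A i)) ≤ m (fapAtom A s) * M := by
    intro s
    rcases Set.eq_empty_or_nonempty (fapAtom A s) with he | ⟨x, hx⟩
    · simp [he, hm.empty]
    · have hint : ∀ i, fapAtom A s ∩ A i = if x ∈ A i then fapAtom A s else ∅ := by
        intro i
        by_cases hxi : x ∈ A i
        · rw [if_pos hxi]
          exact Set.inter_eq_left.mpr (fapAtom_subset ((hx i).mp hxi))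
        · rw [if_neg hxi]
          have : s i = false := by
            cases hsi : s i
            · rfl
            · exact absurd ((hx i).mpr hsi) hxi
          rw [← Set.disjoint_iff_inter_eq_empty]
          exact (disjoint_compl_left : Disjoint (A i)ᶜ (A i)).mono_left
            (fapAtom_subset_compl this)
      calc ∑ i, c i * m (fapAtom A s ∩ A i)
          = m (fapAtom A s) * ∑ i, c i * Set.indicator (A i) 1 x := by
            rw [Finset.mul_sum]
            refine Finset.sum_congr rfl fun i _ => ?_
            rw [hint i]
            by_cases hxi : x ∈ A i <;>
              simp [hxi, hm.empty] <;> ring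
        _ ≤ m (fapAtom A s) * M :=
            mul_le_mul_of_nonneg_left (hM x) (hm.2.1 _)
  calc ∑ i, c i * m (A i) = ∑ s : ι → Bool, ∑ i, c i * m (fapAtom A s ∩ A i) := by
        simp_rw [h1, Finset.mul_sum]
        exact Finset.sum_comm
    _ ≤ ∑ s : ι → Bool, m (fapAtom A s) * M := Finset.sum_le_sum fun s _ => h2 s
    _ = M := by rw [← Finset.sum_mul, hm.sum_atoms A, one_mul]

end Atoms

section Extension

variable {X : Type*}

/-- the submodule of bounded functions -/
def bddFuns (X : Type*) : Submodule ℝ (X → ℝ) where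
  carrier := {f | ∃ C, ∀ x, |f x| ≤ C}
  add_mem' := by
    rintro f g ⟨C, hC⟩ ⟨D, hD⟩
    exact ⟨C + D, fun x => (abs_add_le _ _).trans (add_le_add (hC x) (hD x))⟩
  zero_mem' := ⟨0, fun x => by simp⟩
  smul_mem' := by
    rintro c f ⟨C, hC⟩
    refine ⟨|c| * C, fun x => ?_⟩
    simp only [Pi.smul_apply, smul_eq_mul, abs_mul]
    exact mul_le_mul_of_nonneg_left (hC x) (abs_nonneg c)

lemma indicator_mem_bddFuns (A : Set X) : (Set.indicator A 1 : X → ℝ) ∈ bddFuns X :=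
  ⟨1, fun x => by by_cases h : x ∈ A <;> simp [Set.indicator_apply, h]⟩

/-- Extension of a finitely additive probability measure to a positive linear
functional on all bounded functions. -/
lemma exists_fa_integral {m : Set X → ℝ} (hm : IsFAP m) :
    ∃ g : (X → ℝ) → ℝ,
      (∀ A : Set X, g (Set.indicator A 1) = m A) ∧
      (∀ f₁ f₂ : X → ℝ, f₁ ∈ bddFuns X → f₂ ∈ bddFuns X → g (f₁ + f₂) = g f₁ + g f₂) ∧
      (∀ (c : ℝ) (f : X → ℝ), f ∈ bddFuns X → g (c • f) = c * g f) ∧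
      (∀ f : X → ℝ, f ∈ bddFuns X → (∀ x, 0 ≤ f x) → 0 ≤ g f) := by
  classical
  have hX : Nonempty X := hm.nonempty
  set E := bddFuns X
  -- the sublinear functional: supremum
  set N : E → ℝ := fun f => sSup (Set.range (f : X → ℝ)) with hN
  have hrne : ∀ f : E, (Set.range (f : X → ℝ)).Nonempty := fun f =>
    Set.range_nonempty _
  have hbdd : ∀ f : E, BddAbove (Set.range (f : X → ℝ)) := by
    rintro ⟨f, C, hC⟩
    exact ⟨C, by rintro y ⟨x, rfl⟩; exact (abs_le.mp (hC x)).2⟩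
  have hle_sup : ∀ (f : E) (x : X), (f : X → ℝ) x ≤ N f := fun f x =>
    le_csSup (hbdd f) ⟨x, rfl⟩
  have hsup_le : ∀ (f : E) (M : ℝ), (∀ x, (f : X → ℝ) x ≤ M) → N f ≤ M := fun f M h =>
    csSup_le (hrne f) (by rintro y ⟨x, rfl⟩; exact h x)
  have N_hom : ∀ c : ℝ, 0 < c → ∀ f : E, N (c • f) = c * N f := by
    intro c hc f
    refine le_antisymm (hsup_le _ _ fun x => ?_) ?_
    · exact mul_le_mul_of_nonneg_left (hle_sup f x) hc.le
    · rw [mul_comm, ← le_div_iff₀ hc]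
      refine hsup_le _ _ fun x => ?_
      rw [le_div_iff₀ hc, mul_comm]
      exact hle_sup (c • f) x
  have N_add : ∀ f g : E, N (f + g) ≤ N f + N g := fun f g =>
    hsup_le _ _ fun x => add_le_add (hle_sup f x) (hle_sup g x)
  -- the elementary integral on the span of indicators
  set indE : Set X → E := fun A => ⟨Set.indicator A 1, indicator_mem_bddFuns A⟩ with hindE
  set π : (Set X →₀ ℝ) →ₗ[ℝ] E := Finsupp.linearCombination ℝ indE with hπ
  set I : (Set X →₀ ℝ) →ₗ[ℝ] ℝ := Finsupp.linearCombination ℝ (fun A => m A) with hI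
  -- the key bound
  have hbound : ∀ f : Set X →₀ ℝ, I f ≤ N (π f) := by
    intro f
    have hπf : ∀ x : X, ((π f : E) : X → ℝ) x
        = ∑ A ∈ f.support, f A * Set.indicator A 1 x := by
      intro x
      rw [hπ, Finsupp.linearCombination_apply, Finsupp.sum]
      simp only [AddSubmonoidClass.coe_finset_sum, Finset.sum_apply]
      refine Finset.sum_congr rfl fun A _ => ?_
      simp [hindE]
    have hIf : I f = ∑ A ∈ f.support, f A * m A := by
      rw [hI, Finsupp.linearCombination_apply, Finsupp.sum]
      simp [smul_eq_mul]
    rw [hIf]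
    rw [show (∑ A ∈ f.support, f A * m A)
        = ∑ i : f.support, f i.1 * m i.1 from (Finset.sum_coe_sort _ _).symm]
    refine hm.key (fun i : f.support => f i.1) (fun i : f.support => i.1) _ fun x => ?_
    rw [show (∑ i : f.support, f i.1 * Set.indicator i.1 1 x)
        = ∑ A ∈ f.support, f A * Set.indicator A 1 x from
        Finset.sum_coe_sort f.support (fun A => f A * Set.indicator A 1 x)]
    rw [← hπf x]
    exact hle_sup (π f) x
  have hker : ∀ f : Set X →₀ ℝ, π f = 0 → I f = 0 := by
    intro f hf
    have h1 := hbound f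
    have h2 := hbound (-f)
    rw [hf] at h1
    rw [map_neg, map_neg, hf, neg_zero] at h2
    have : N (0 : E) = 0 := by
      refine le_antisymm (hsup_le _ _ fun x => ?_) (le_trans ?_ (hle_sup 0 (Classical.arbitrary X)))
      · norm_num
      · norm_num
    rw [this] at h1 h2
    linarith
  -- build the partial linear map on the range of π
  have hker' : LinearMap.ker π ≤ LinearMap.ker I := fun f hf => hker f hf
  set L₀ : ↥(LinearMap.range π) →ₗ[ℝ] ℝ :=
    (Submodule.liftQ (LinearMap.ker π) I hker').comp
      (LinearMap.quotKerEquivRange π).symm.toLinearMap with hL₀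
  have hL₀_apply : ∀ f : Set X →₀ ℝ, L₀ ⟨π f, LinearMap.mem_range_self π f⟩ = I f := by
    intro f
    rw [hL₀]
    simp only [LinearMap.coe_comp, Function.comp_apply, LinearEquiv.coe_coe]
    rw [show (⟨π f, LinearMap.mem_range_self π f⟩ : ↥(LinearMap.range π))
        = (LinearMap.quotKerEquivRange π) (Submodule.Quotient.mk f) from
        Subtype.ext (LinearMap.quotKerEquivRange_apply_mk π f).symm]
    rw [LinearEquiv.symm_apply_apply]
    exact Submodule.liftQ_apply _ _ _
  set F : E →ₗ.[ℝ] ℝ := ⟨LinearMap.range π, L₀⟩ with hF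
  have hFdom : F.domain = LinearMap.range π := rfl
  have hFbd : ∀ x : F.domain, F x ≤ N x := by
    rintro ⟨x, hx⟩
    obtain ⟨f, rfl⟩ := hx
    calc F ⟨π f, LinearMap.mem_range_self π f⟩ = I f := hL₀_apply f
    _ ≤ N (π f) := hbound f
  obtain ⟨G, hGext, hGle⟩ := exists_extension_of_le_sublinear F N N_hom N_add hFbd
  -- final function
  refine ⟨fun f => if h : f ∈ bddFuns X then G ⟨f, h⟩ else 0, ?_, ?_, ?_, ?_⟩
  · intro A
    dsimp only
    rw [dif_pos (indicator_mem_bddFuns A)]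
    have h1 : (⟨Set.indicator A 1, indicator_mem_bddFuns A⟩ : E) = π (Finsupp.single A 1) := by
      apply Subtype.ext
      simp [hπ, hindE]
    rw [h1]
    calc G (π (Finsupp.single A 1))
        = F ⟨π (Finsupp.single A 1), LinearMap.mem_range_self π _⟩ :=
          hGext ⟨π (Finsupp.single A 1), LinearMap.mem_range_self π _⟩
      _ = I (Finsupp.single A 1) := hL₀_apply _
      _ = m A := by simp [hI]
  · intro f₁ f₂ h₁ h₂
    dsimp only
    rw [dif_pos (add_mem h₁ h₂), dif_pos h₁, dif_pos h₂]
    rw [show (⟨f₁ + f₂, add_mem h₁ h₂⟩ : E) = (⟨f₁, h₁⟩ : E) + ⟨f₂, h₂⟩ from rfl]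
    exact map_add G _ _
  · intro c f h
    dsimp only
    rw [dif_pos (Submodule.smul_mem _ c h), dif_pos h]
    rw [show (⟨c • f, Submodule.smul_mem _ c h⟩ : E) = c • (⟨f, h⟩ : E) from rfl]
    rw [map_smul]
    rfl
  · intro f h hf
    dsimp only
    rw [dif_pos h]
    have h1 : G (-(⟨f, h⟩ : E)) ≤ N (-(⟨f, h⟩ : E)) := hGle _
    have h2 : N (-(⟨f, h⟩ : E)) ≤ 0 := hsup_le _ _ fun x => by
      simpa using hf x
    rw [map_neg] at h1
    linarith

end Extension

section Product

variable {X Y : Type*}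

lemma exists_product_fap (μ : Set X → ℝ) (l : Set Y → ℝ) (hμ : IsFAP μ) (hl : IsFAP l) :
    ∃ ω : Set (X × Y) → ℝ, IsFAP ω ∧ ∀ (A : Set X) (B : Set Y), ω (A ×ˢ B) = μ A * l B := by
  obtain ⟨g, hgind, hgadd, hgsmul, hgpos⟩ := exists_fa_integral hμ
  have hslice : ∀ S : Set (X × Y), (fun x => l {y | (x, y) ∈ S}) ∈ bddFuns X := by
    intro S
    refine ⟨1, fun x => ?_⟩
    rw [abs_le]
    exact ⟨by linarith [hl.2.1 {y | (x, y) ∈ S}], hl.le_one _⟩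
  refine ⟨fun S => g (fun x => l {y | (x, y) ∈ S}), ⟨?_, ?_, ?_⟩, ?_⟩
  · dsimp only
    have h1 : (fun x : X => l {y | (x, y) ∈ (Set.univ : Set (X × Y))})
        = Set.indicator Set.univ 1 := by
      funext x
      simp only [Set.mem_univ, Set.setOf_true, Set.indicator_univ, Pi.one_apply]
      exact hl.1
    rw [h1, hgind]
    exact hμ.1
  · intro S
    exact hgpos _ (hslice S) fun x => hl.2.1 _
  · intro S T hST
    dsimp only
    have h1 : (fun x : X => l {y | (x, y) ∈ S ∪ T})
        = (fun x => l {y | (x, y) ∈ S}) + (fun x => l {y | (x, y) ∈ T}) := by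
      funext x
      have hd : Disjoint {y | (x, y) ∈ S} {y | (x, y) ∈ T} := by
        rw [Set.disjoint_left] at hST ⊢
        exact fun y hyS hyT => hST hyS hyT
      have hu : {y | (x, y) ∈ S ∪ T} = {y | (x, y) ∈ S} ∪ {y | (x, y) ∈ T} := rfl
      rw [hu]
      exact hl.2.2 _ _ hd
    rw [h1]
    exact hgadd _ _ (hslice S) (hslice T)
  · intro A B
    dsimp only
    have h1 : (fun x : X => l {y | (x, y) ∈ A ×ˢ B}) = l B • Set.indicator A 1 := by
      funext x
      by_cases hx : x ∈ A
      · have h2 : {y | (x, y) ∈ A ×ˢ B} = B := by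
          ext y; simp [hx]
        rw [h2]
        simp [Set.indicator_of_mem hx]
      · have h2 : {y | (x, y) ∈ A ×ˢ B} = ∅ := by
          ext y; simp [hx]
        rw [h2, hl.empty]
        simp [Set.indicator_of_notMem hx]
    rw [h1, hgsmul _ _ (indicator_mem_bddFuns A), hgind, mul_comm]

/-- The main quantitative lemma. -/
lemma fap_main (μ : Set X → ℝ) (l : Set Y → ℝ)
    (hμ : IsFAP μ) (hl : IsFAP l) (R : Set (X × Y)) (α : ℝ) (hα : 0 < α)
    (houter : ∀ (nQ : ℕ) (Q : Set (X × Y)), IsRectUnionN nQ Q → R ⊆ Q →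
      ∀ ω : Set (X × Y) → ℝ, IsFAP ω →
        (∀ (A : Set X) (B : Set Y), ω (A ×ˢ B) = μ A * l B) → α ≤ ω Q) :
    ∀ ε : ℝ, 0 < ε → ε < α → ∀ (nP nQ : ℕ) (P Q : Set (X × Y)),
      IsRectUnionN nP P → IsRectUnionN nQ Q → P ⊆ R → R ⊆ Q →
      (∀ ω : Set (X × Y) → ℝ, IsFAP ω →
        (∀ (A : Set X) (B : Set Y), ω (A ×ˢ B) = μ A * l B) → ω Q - ω P ≤ ε) →
      ∃ (A : Set X) (B : Set Y), A ×ˢ B ⊆ R ∧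
        μ A * l B ≥ (α - ε) / ((2 ^ (nP + nQ) : ℝ) * 2 ^ (nP + nQ)) := by
  classical
  obtain ⟨ω, hω, hωprod⟩ := exists_product_fap μ l hμ hl
  intro ε hε hεα nP nQ P Q hP hQ hPR hRQ hPQ
  obtain ⟨AP, BP, hPdef⟩ := hP
  obtain ⟨AQ, BQ, hQdef⟩ := hQ
  set ι := Fin nP ⊕ Fin nQ with hι
  set EX : ι → Set X := Sum.elim AP AQ with hEX
  set EY : ι → Set Y := Sum.elim BP BQ with hEY
  set S : Finset ((ι → Bool) × (ι → Bool)) :=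
    Finset.univ.filter (fun p => fapAtom EX p.1 ×ˢ fapAtom EY p.2 ⊆ P) with hS
  set NR : ℝ := (2 ^ (nP + nQ) : ℝ) * 2 ^ (nP + nQ) with hNR
  have hNpos : (0 : ℝ) < NR := by positivity
  have hqpos : (0 : ℝ) < (α - ε) / NR := div_pos (by linarith) hNpos
  set q : ℝ := (α - ε) / NR with hq
  -- decomposition of P into atom rectangles
  have hPdecomp : P = ⋃ p ∈ S, fapAtom EX p.1 ×ˢ fapAtom EY p.2 := by
    apply Set.Subset.antisymm
    · rintro ⟨x, y⟩ hxy
      obtain ⟨s, hs⟩ := mem_fapAtom_sig EX x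
      obtain ⟨t, ht⟩ := mem_fapAtom_sig EY y
      have hsub : fapAtom EX s ×ˢ fapAtom EY t ⊆ P := by
        have hxy' := hxy
        rw [hPdef] at hxy'
        simp only [Set.mem_iUnion, Set.mem_prod] at hxy'
        obtain ⟨i, hxi, hyi⟩ := hxy'
        have hsi : s (Sum.inl i) = true := (hs (Sum.inl i)).mp hxi
        have hti : t (Sum.inl i) = true := (ht (Sum.inl i)).mp hyi
        rintro ⟨x', y'⟩ ⟨hx', hy'⟩
        rw [hPdef]
        refine Set.mem_iUnion.mpr ⟨i, ?_, ?_⟩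
        · exact (hx' (Sum.inl i)).mpr hsi
        · exact (hy' (Sum.inl i)).mpr hti
      have hmem : (s, t) ∈ S := by
        rw [hS, Finset.mem_filter]
        exact ⟨Finset.mem_univ _, hsub⟩
      exact Set.mem_biUnion hmem (Set.mk_mem_prod hs ht)
    · exact Set.iUnion₂_subset fun p hp => (Finset.mem_filter.mp hp).2
  have hdisj : ∀ p ∈ S, ∀ r ∈ S, p ≠ r →
      Disjoint (fapAtom EX p.1 ×ˢ fapAtom EY p.2) (fapAtom EX r.1 ×ˢ fapAtom EY r.2) := by
    intro p _ r _ hpr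
    rw [Set.disjoint_left]
    rintro ⟨x, y⟩ ⟨hx1, hy1⟩ ⟨hx2, hy2⟩
    by_cases h1 : p.1 = r.1
    · have h2 : p.2 ≠ r.2 := fun h => hpr (Prod.ext h1 h)
      exact Set.disjoint_left.mp (fapAtom_disjoint EY h2) hy1 hy2
    · exact Set.disjoint_left.mp (fapAtom_disjoint EX h1) hx1 hx2
  have hωP : ω P = ∑ p ∈ S, μ (fapAtom EX p.1) * l (fapAtom EY p.2) := by
    rw [hPdecomp, hω.biUnion S _ hdisj]
    exact Finset.sum_congr rfl fun p _ => hωprod _ _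
  have hωQ : α ≤ ω Q := houter nQ Q ⟨AQ, BQ, hQdef⟩ hRQ ω hω hωprod
  have hdiff : ω Q - ω P ≤ ε := hPQ ω hω hωprod
  have hsum : α - ε ≤ ∑ p ∈ S, μ (fapAtom EX p.1) * l (fapAtom EY p.2) := by
    rw [← hωP]; linarith
  have hcard : (S.card : ℝ) ≤ NR := by
    have h1 : S.card ≤ Fintype.card ((ι → Bool) × (ι → Bool)) := Finset.card_le_univ S
    have h2 : Fintype.card ((ι → Bool) × (ι → Bool)) = 2 ^ (nP + nQ) * 2 ^ (nP + nQ) := by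
      simp [hι]
    rw [h2] at h1
    rw [hNR]
    push_cast
    exact_mod_cast h1
  by_contra hcon
  push_neg at hcon
  have hlt : ∀ p ∈ S, μ (fapAtom EX p.1) * l (fapAtom EY p.2) < q := by
    intro p hp
    have hsub : fapAtom EX p.1 ×ˢ fapAtom EY p.2 ⊆ R :=
      (Finset.mem_filter.mp hp).2.trans hPR
    exact hcon _ _ hsub
  have hne : S.Nonempty := by
    rcases S.eq_empty_or_nonempty with h | h
    · rw [h, Finset.sum_empty] at hsum
      linarith
    · exact h
  have h3 : ∑ p ∈ S, μ (fapAtom EX p.1) * l (fapAtom EY p.2) < ∑ _p ∈ S, q :=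
    Finset.sum_lt_sum_of_nonempty hne hlt
  rw [Finset.sum_const, nsmul_eq_mul] at h3
  have h4 : (S.card : ℝ) * q ≤ NR * q :=
    mul_le_mul_of_nonneg_right hcard hqpos.le
  have h5 : NR * q = α - ε := by
    rw [hq, mul_div_cancel₀ _ hNpos.ne']
  linarith

end Product

theorem stmt_10 {X Y : Type*} (μ : Set X → ℝ) (l : Set Y → ℝ)
    (hμ : IsFAP μ) (hl : IsFAP l) (R : Set (X × Y)) (α : ℝ) (hα : 0 < α)
    (happrox : ∀ ε > (0 : ℝ), ∃ (nP nQ : ℕ) (P Q : Set (X × Y)),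
      IsRectUnionN nP P ∧ IsRectUnionN nQ Q ∧ P ⊆ R ∧ R ⊆ Q ∧
      ∀ ω : Set (X × Y) → ℝ, IsFAP ω →
        (∀ (A : Set X) (B : Set Y), ω (A ×ˢ B) = μ A * l B) → ω Q - ω P ≤ ε)
    -- the (μ×λ)-outer measure of R is at least α: every cover of R by a finite
    -- union of rectangles has product measure at least α
    (houter : ∀ (nQ : ℕ) (Q : Set (X × Y)), IsRectUnionN nQ Q → R ⊆ Q →
      ∀ ω : Set (X × Y) → ℝ, IsFAP ω →
        (∀ (A : Set X) (B : Set Y), ω (A ×ˢ B) = μ A * l B) → α ≤ ω Q) :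
    (∀ δ : ℝ, 0 < δ → δ < α → ∃ (A : Set X) (B : Set Y),
        A ×ˢ B ⊆ R ∧ 0 < μ A ∧ 0 < l B) ∧
    -- quantitatively: for any ε ∈ (0, α) and any witnessing pair P, Q made of
    -- nP and nQ rectangles, some rectangle A × B ⊆ R carries measure at least
    -- (α - ε)/N where N = 2^(nP+nQ) · 2^(nP+nQ) is the number of atom-pairs
    (∀ ε : ℝ, 0 < ε → ε < α → ∀ (nP nQ : ℕ) (P Q : Set (X × Y)),
      IsRectUnionN nP P → IsRectUnionN nQ Q → P ⊆ R → R ⊆ Q →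
      (∀ ω : Set (X × Y) → ℝ, IsFAP ω →
        (∀ (A : Set X) (B : Set Y), ω (A ×ˢ B) = μ A * l B) → ω Q - ω P ≤ ε) →
      ∃ (A : Set X) (B : Set Y), A ×ˢ B ⊆ R ∧
        μ A * l B ≥ (α - ε) / ((2 ^ (nP + nQ) : ℝ) * 2 ^ (nP + nQ))) := by
  have main := fap_main μ l hμ hl R α hα houter
  refine ⟨?_, main⟩
  intro δ hδ hδα
  obtain ⟨nP, nQ, P, Q, hP, hQ, hPR, hRQ, hPQ⟩ := happrox (α - δ) (by linarith)
  obtain ⟨A, B, hAB, hbound⟩ :=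
    main (α - δ) (by linarith) (by linarith) nP nQ P Q hP hQ hPR hRQ hPQ
  have hNpos : (0 : ℝ) < (2 ^ (nP + nQ) : ℝ) * 2 ^ (nP + nQ) := by positivity
  have hprod : 0 < μ A * l B := by
    refine lt_of_lt_of_le ?_ hbound
    have : α - (α - δ) = δ := by ring
    rw [this]
    exact div_pos hδ hNpos
  have hA : 0 < μ A := by
    rcases (hμ.2.1 A).lt_or_eq with h | h
    · exact h
    · rw [← h, zero_mul] at hprod
      exact absurd hprod (lt_irrefl 0)
  have hB : 0 < l B := by
    rcases (hl.2.1 B).lt_or_eq with h | h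
    · exact h
    · rw [← h, mul_zero] at hprod
      exact absurd hprod (lt_irrefl 0)
  exact ⟨A, B, hAB, hA, hB⟩
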